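/- Let H be a non-abelian subgroup of a finite group G. Suppose p is the smallest prime dividing |Aut(G)| and q is the smallest prime dividing |H|, and Pr(H, Aut(G)) = (q² + p − 1)/(pq²). Then the quotient group H / L(H, Aut(G)) is isomorphic to ℤ_q × ℤ_q. -/

import Mathlib

open scoped Classical

variable {G : Type*}

/-- The relative autocommutativity degree `Pr(H, Aut(G))`: the probability that a randomly
chosen automorphism of `G` fixes a randomly chosen element of the subgroup `H`. -/
noncomputable def autPr [Group G] (H : Subgroup G) : ℚ :=
  (Nat.card {p : H × MulAut G // p.2 (p.1 : G) = (p.1 : G)} : ℚ) /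
    ((Nat.card H : ℚ) * (Nat.card (MulAut G) : ℚ))

/-- `L(H, Aut(G))`, the subgroup of elements of `H` fixed by every automorphism of `G`. -/
def autFix [Group G] (H : Subgroup G) : Subgroup G where
  carrier := {x | x ∈ H ∧ ∀ α : MulAut G, α x = x}
  one_mem' := ⟨H.one_mem, fun α => map_one α⟩
  mul_mem' := fun ha hb => ⟨H.mul_mem ha.1 hb.1, fun α => by
    rw [map_mul, ha.2 α, hb.2 α]⟩
  inv_mem' := fun ha => ⟨H.inv_mem ha.1, fun α => by rw [map_inv, ha.2 α]⟩

instance autFix_normal [Group G] (H : Subgroup G) : ((autFix H).subgroupOf H).Normal := by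
  constructor
  intro n hn g
  rw [Subgroup.mem_subgroupOf] at hn ⊢
  obtain ⟨-, hfix⟩ := hn
  have hcen : ∀ c : G, c * (n : G) = (n : G) * c := by
    intro c
    have h := hfix (MulAut.conj c)
    simp only [MulAut.conj_apply] at h
    exact mul_inv_eq_iff_eq_mul.mp h
  have hconj : ∀ c : G, c * (n : G) * c⁻¹ = (n : G) := by
    intro c
    rw [hcen c, mul_inv_cancel_right]
  refine ⟨(g * n * g⁻¹).2, fun α => ?_⟩
  push_cast
  rw [map_mul, map_mul, map_inv, hfix α, hconj (α g), hconj (g : G)]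

/-- `X_H`: the set of elements of `H` whose centralizer in `Aut(G)` is trivial, i.e. the only
automorphism fixing them is the identity. -/
def autX [Group G] (H : Subgroup G) : Set H :=
  {x | ∀ α : MulAut G, α (x : G) = x → α = 1}

/-- `S(H, Aut(G))`: the set of autocommutators `[x, α] = x⁻¹ α(x)` with `x ∈ H`, `α ∈ Aut(G)`. -/
def autS [Group G] (H : Subgroup G) : Set G :=
  {g | ∃ x ∈ H, ∃ α : MulAut G, g = x⁻¹ * α x}

/-- Every autocommutator `x⁻¹ α(x)` with `x ∈ H` lies in `[H, Aut(G)] = ⟨S(H, Aut(G))⟩`. -/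
lemma autcomm_mem_closure [Group G] (H : Subgroup G) (x : H) (α : MulAut G) :
    (x : G)⁻¹ * α x ∈ Subgroup.closure (autS H) :=
  Subgroup.subset_closure ⟨x, x.2, α, rfl⟩


section AuxLemmas

lemma stab_bound' {G : Type*} [Group G] [Fintype G] (p : ℕ)
    (hpmin : ∀ r : ℕ, r.Prime → r ∣ Nat.card (MulAut G) → p ≤ r) (x : G)
    (hx : ¬ ∀ α : MulAut G, α x = x) :
    p * Nat.card {α : MulAut G // α x = x} ≤ Nat.card (MulAut G) := by
  set St := MulAction.stabilizer (MulAut G) x with hSt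
  have hcard : Nat.card {α : MulAut G // α x = x} = Nat.card St :=
    Nat.card_congr (Equiv.subtypeEquivRight (fun α => Iff.rfl))
  have hne : St ≠ ⊤ := by
    push_neg at hx
    obtain ⟨α, hα⟩ := hx
    intro hT
    exact hα (by simpa [hSt, MulAction.mem_stabilizer_iff] using
      (hT ▸ Subgroup.mem_top α : α ∈ St))
  have hidx1 : St.index ≠ 1 := fun hc => hne (Subgroup.index_eq_one.mp hc)
  have hdvd : St.index ∣ Nat.card (MulAut G) := St.index_dvd_card
  have hple : p ≤ St.index := by
    have hm : (St.index).minFac.Prime := Nat.minFac_prime hidx1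
    exact le_trans (hpmin _ hm ((Nat.minFac_dvd _).trans hdvd)) (Nat.minFac_le
      (Nat.pos_of_ne_zero (Subgroup.index_ne_zero_of_finite)))
  calc p * Nat.card {α : MulAut G // α x = x} = p * Nat.card St := by rw [hcard]
    _ ≤ St.index * Nat.card St := Nat.mul_le_mul_right _ hple
    _ = Nat.card (MulAut G) := by rw [mul_comm]; exact St.card_mul_index

lemma aux_iso' (q : ℕ) (hq : q.Prime) (Q : Type*) [CommGroup Q] [Finite Q]
    (hcard : Nat.card Q = q ^ 2) (hnc : ¬ IsCyclic Q) :
    Nonempty (Q ≃* Multiplicative (ZMod q) × Multiplicative (ZMod q)) := by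
  haveI := Fact.mk hq
  have hexp : ∀ g : Q, g ^ q = 1 := by
    intro g
    have hdvd : orderOf g ∣ q ^ 2 := hcard ▸ orderOf_dvd_natCard g
    obtain ⟨i, hi, hoi⟩ := (Nat.dvd_prime_pow hq).mp hdvd
    have hne : orderOf g ≠ q ^ 2 := fun hc =>
      hnc (isCyclic_of_orderOf_eq_card g (by rw [hc, hcard]))
    have hile : i ≤ 1 := by
      rcases Nat.lt_or_ge i 2 with h' | h'
      · omega
      · exfalso; exact hne (by rw [hoi, Nat.le_antisymm hi h'])
    have := orderOf_dvd_iff_pow_eq_one.mp (hoi ▸ pow_dvd_pow q hile)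
    simpa using this
  letI : Module (ZMod q) (Additive Q) := AddCommGroup.zmodModule (n := q) (fun x => by
    have := hexp x.toMul
    rw [← toMul_nsmul] at this
    exact this)
  haveI : Fintype (Additive Q) := Fintype.ofFinite _
  haveI : Module.Finite (ZMod q) (Additive Q) :=
    Module.Finite.of_finite (R := ZMod q) (M := Additive Q)
  haveI : Module.Free (ZMod q) (Additive Q) := Module.Free.of_divisionRing (ZMod q) _
  have hfr : Module.finrank (ZMod q) (Additive Q) = 2 := by
    have h1 := Module.card_eq_pow_finrank (K := ZMod q) (V := Additive Q)
    rw [ZMod.card] at h1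
    apply Nat.pow_right_injective hq.two_le
    show q ^ _ = q ^ 2
    rw [← h1, ← Nat.card_eq_fintype_card]
    exact hcard
  let b : Module.Basis (Fin 2) (ZMod q) (Additive Q) :=
    @Module.finBasisOfFinrankEq (ZMod q) (Additive Q) _ _ _ ‹_› _ ‹_› 2 hfr
  let e1 : Additive Q ≃ₗ[ZMod q] (Fin 2 → ZMod q) := b.equivFun
  let e2 : (Fin 2 → ZMod q) ≃+ ZMod q × ZMod q :=
    { piFinTwoEquiv (fun _ => ZMod q) with map_add' := fun f g => rfl }
  let eV : Additive Q ≃+ ZMod q × ZMod q := e1.toAddEquiv.trans e2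
  let e3 := MulEquiv.prodMultiplicative (ZMod q) (ZMod q)
  exact ⟨(MulEquiv.multiplicativeAdditive Q).symm.trans
    ((AddEquiv.toMultiplicative eV).trans e3)⟩

end AuxLemmas

theorem stmt11 [Group G] [Fintype G] [DecidableEq G] (H : Subgroup G)
    (hna : ¬ IsMulCommutative H) (p q : ℕ)
    (hp : p.Prime) (hpdvd : p ∣ Nat.card (MulAut G))
    (hpmin : ∀ r : ℕ, r.Prime → r ∣ Nat.card (MulAut G) → p ≤ r)
    (hq : q.Prime) (hqdvd : q ∣ Nat.card H)
    (hqmin : ∀ r : ℕ, r.Prime → r ∣ Nat.card H → q ≤ r)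
    (h : autPr H = ((q : ℚ) ^ 2 + (p : ℚ) - 1) / ((p : ℚ) * (q : ℚ) ^ 2)) :
    Nonempty ((H ⧸ (autFix H).subgroupOf H)
      ≃* Multiplicative (ZMod q) × Multiplicative (ZMod q)) := by
  classical
  set L' : Subgroup H := (autFix H).subgroupOf H with hL'
  haveI : Fintype (MulAut G) := Fintype.ofFinite _
  set a := Nat.card (MulAut G) with ha
  set hh := Nat.card H with hhh
  set N := Nat.card {p : H × MulAut G // p.2 (p.1 : G) = (p.1 : G)} with hN
  set l := Nat.card L' with hl
  set k := Nat.card (H ⧸ L') with hk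
  -- membership in L'
  have hmemL : ∀ x : H, x ∈ L' ↔ ∀ α : MulAut G, α (x : G) = (x : G) := by
    intro x
    rw [hL', Subgroup.mem_subgroupOf]
    exact ⟨fun hx => hx.2, fun hx => ⟨x.2, hx⟩⟩
  -- counting
  have hcnt : N = ∑ x : H, Nat.card {α : MulAut G // α (x : G) = (x : G)} := by
    rw [hN, Nat.card_congr (Equiv.subtypeProdEquivSigmaSubtype
      (fun (x : H) (α : MulAut G) => α (x : G) = (x : G)))]
    rw [Nat.card_eq_fintype_card, Fintype.card_sigma]
    exact Finset.sum_congr rfl fun x _ => (Nat.card_eq_fintype_card).symm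
  have hSfix : ∀ x : H, (∀ α : MulAut G, α (x : G) = (x : G)) →
      Nat.card {α : MulAut G // α (x : G) = (x : G)} = a := fun x hx =>
    Nat.card_congr (Equiv.subtypeUnivEquiv hx)
  have key : p * N ≤ ∑ x : H,
      (if (∀ α : MulAut G, α (x : G) = (x : G)) then p * a else a) := by
    rw [hcnt, Finset.mul_sum]
    apply Finset.sum_le_sum
    intro x _
    by_cases hx : ∀ α : MulAut G, α (x : G) = (x : G)
    · rw [if_pos hx, hSfix x hx]
    · rw [if_neg hx]
      exact stab_bound' p hpmin (x : G) hx
  -- compute the sum with the filter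
  have hlcard : l = (Finset.univ.filter
      (fun x : H => ∀ α : MulAut G, α (x : G) = (x : G))).card := by
    rw [hl, Nat.card_eq_fintype_card, Fintype.card_subtype]
    congr 1
    apply Finset.filter_congr
    intro x _
    simp only [hmemL x]
  have hhcard : hh = Fintype.card H := Nat.card_eq_fintype_card
  have hsum : ∑ x : H, (if (∀ α : MulAut G, α (x : G) = (x : G)) then p * a else a)
      = l * (p * a) + (hh - l) * a := by
    rw [Finset.sum_ite, Finset.sum_const, Finset.sum_const, smul_eq_mul, smul_eq_mul,
      ← hlcard]
    congr 2
    rw [Finset.filter_not, Finset.card_sdiff_of_subset (Finset.filter_subset _ _), ← hlcard]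
    congr 1
    rw [hhcard, Fintype.card]
  have key2 : p * N ≤ l * (p * a) + (hh - l) * a := le_trans key (le_of_eq hsum)
  -- basic positivity and Lagrange
  have hhk : hh = k * l := by
    rw [hhh, hk, hl, hL']
    exact Subgroup.card_eq_card_quotient_mul_card_subgroup _
  have hapos : 0 < a := Nat.card_pos
  have hlpos : 0 < l := Nat.card_pos
  have hkpos : 0 < k := Nat.card_pos
  have hhpos : 0 < hh := Nat.card_pos
  have hlle : l ≤ hh := by rw [hhk]; exact Nat.le_mul_of_pos_left _ hkpos
  -- the rational equation
  have hNq : (N : ℚ) * (p * q ^ 2) = ((q : ℚ) ^ 2 + p - 1) * (hh * a) := by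
    have hPr : autPr H = (N : ℚ) / ((hh : ℚ) * a) := rfl
    rw [hPr] at h
    have hha : ((hh : ℚ) * a) ≠ 0 := by positivity
    have hpq : ((p : ℚ) * (q : ℚ) ^ 2) ≠ 0 := by
      have : (0:ℚ) < p := by exact_mod_cast hp.pos
      have : (0:ℚ) < q := by exact_mod_cast hq.pos
      positivity
    field_simp at h
    rw [h, div_mul_eq_mul_div, div_eq_iff (by rw [mul_comm]; exact hpq)]; ring
  -- conclude k ≤ q ^ 2
  have hkle : k ≤ q ^ 2 := by
    have hkey : (p : ℚ) * N ≤ l * (p * a) + ((hh : ℚ) - l) * a := by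
      have := key2
      have h2 : ((p * N : ℕ) : ℚ) ≤ ((l * (p * a) + (hh - l) * a : ℕ) : ℚ) := by
        exact_mod_cast this
      push_cast [Nat.cast_sub hlle] at h2
      convert h2 using 2 <;> push_cast <;> ring
    have hq2 : (0:ℚ) < (q : ℚ) ^ 2 := by
      have : (0:ℚ) < q := by exact_mod_cast hq.pos
      positivity
    have haQ : (0:ℚ) < a := by exact_mod_cast hapos
    have hlQ : (0:ℚ) < l := by exact_mod_cast hlpos
    have hpQ : (2:ℚ) ≤ p := by exact_mod_cast hp.two_le
    have hhkQ : (hh : ℚ) = k * l := by exact_mod_cast hhk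
    have hmain : ((q:ℚ)^2 + p - 1) * (hh * a) ≤ (q:ℚ)^2 * (l * (p*a) + ((hh:ℚ) - l) * a) := by
      calc ((q:ℚ)^2 + p - 1) * (hh * a) = (N:ℚ) * (p * q^2) := hNq.symm
        _ = (q:ℚ)^2 * ((p:ℚ) * N) := by ring
        _ ≤ (q:ℚ)^2 * (l * (p*a) + ((hh:ℚ) - l) * a) :=
            mul_le_mul_of_nonneg_left hkey (le_of_lt hq2)
    have hfin : (k:ℚ) ≤ (q:ℚ)^2 := by
      rw [hhkQ] at hmain
      have h2 : ((p:ℚ)-1) * k * (l*a) ≤ ((p:ℚ)-1) * q^2 * (l*a) := by nlinarith [hmain]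
      have h3 : ((p:ℚ)-1) * k ≤ ((p:ℚ)-1) * q^2 :=
        le_of_mul_le_mul_right h2 (mul_pos hlQ haQ)
      exact le_of_mul_le_mul_left h3 (by linarith)
    exact_mod_cast hfin
  -- L' is contained in the center of H
  have hLcen : L' ≤ Subgroup.center H := by
    intro x hx
    rw [Subgroup.mem_center_iff]
    intro y
    have hfix := (hmemL x).mp hx
    have hc := hfix (MulAut.conj (y : G))
    simp only [MulAut.conj_apply] at hc
    have : (y : G) * x = (x : G) * y := by
      have := mul_inv_eq_iff_eq_mul.mp hc
      exact this
    exact Subtype.ext this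
  -- quotient is not cyclic
  have hnotcyc : ¬ IsCyclic (H ⧸ L') := by
    intro hcyc
    apply hna
    have hcomm : ∀ x y : H, x * y = y * x := by
      apply commutative_of_cyclic_center_quotient (QuotientGroup.mk' L')
      rw [QuotientGroup.ker_mk']
      exact hLcen
    exact ⟨⟨fun x y => hcomm x y⟩⟩
  -- k = q ^ 2
  have hkdvd : k ∣ hh := Dvd.intro l (hhk.symm)
  have hkne1 : k ≠ 1 := by
    intro hk1
    apply hnotcyc
    haveI : Subsingleton (H ⧸ L') := (Nat.card_eq_one_iff_unique.mp (hk ▸ hk1)).1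
    infer_instance
  have hkq2 : k = q ^ 2 := by
    set r := k.minFac with hr
    have hrp : r.Prime := Nat.minFac_prime hkne1
    have hrdvd : r ∣ k := Nat.minFac_dvd k
    have hqr : q ≤ r := hqmin r hrp (hrdvd.trans hkdvd)
    obtain ⟨m, hm⟩ := hrdvd
    by_cases hm1 : m = 1
    · -- k = r prime : quotient cyclic, contradiction
      exfalso
      apply hnotcyc
      haveI : Fact r.Prime := Fact.mk hrp
      exact isCyclic_of_prime_card (p := r) (by rw [← hk, hm, hm1, mul_one])
    · have hmne0 : m ≠ 0 := by
        intro h0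
        rw [h0, mul_zero] at hm
        exact hkpos.ne' hm
      have hmm : q ≤ m := by
        have hmp : m.minFac.Prime := Nat.minFac_prime hm1
        have : m.minFac ∣ hh := ((Nat.minFac_dvd m).trans ⟨r, by rw [hm, mul_comm]⟩).trans hkdvd
        exact le_trans (hqmin _ hmp this) (Nat.minFac_le (Nat.pos_of_ne_zero hmne0))
      have : q ^ 2 ≤ k := by
        rw [hm, pow_two]
        exact Nat.mul_le_mul hqr hmm
      omega
  -- conclude via the auxiliary isomorphism lemma
  have hcardQ : Nat.card (H ⧸ L') = q ^ 2 := by rw [← hk]; exact hkq2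
  haveI := Fact.mk hq
  letI : CommGroup (H ⧸ L') := IsPGroup.commGroupOfCardEqPrimeSq hcardQ
  exact aux_iso' q hq (H ⧸ L') hcardQ hnotcyc
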